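/- (Theorem 1, conditional form.) Let (Ω, 𝓕, P) be a probability space, α ∈ (0,1], q ∈ ℝ, ε ∈ (0, 1−q), δ ∈ (0,1), and let n satisfy n > (1/2)·ln(2/(1−√(1−δ)))·(1/ε)²·((2−α)/α)². Let F₀, F_a : ℝ → ℝ be the true nominal and alien score CDFs, set Fₘ(x) = (1−α)·F₀(x) + α·F_a(x), and let F̂₀, F̂ₘ : Ω × ℝ → ℝ be measurable random functions (the empirical CDFs of size-n samples). Suppose the events A = {ω : ∃x, |F̂ₘ(ω,x) − Fₘ(x)| > α·ε/(2−α)} and B = {ω : ∃x, |F̂₀(ω,x) − F₀(x)| > α·ε/(2−α)} are measurable, independent, and each has probability at most 2·exp(−2·n·(α·ε/(2−α))²) (Massart's inequality). Then with probability at least 1 − δ over ω, every threshold τ ∈ ℝ satisfying (F̂ₘ(ω,τ) − (1−α)·F̂₀(ω,τ))/α ≤ q also satisfies F_a(τ) ≤ q + ε; in particular, any threshold returned by Algorithm 1 achieves an alien detection rate of at least 1 − q − ε. -/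

import Mathlib

open MeasureTheory

/-- Theorem 1 (conditional form).  Under the sample-size condition, if the two
sup-norm deviation events are independent and each bounded by the Massart/DKW
tail bound, then with probability at least `1 − δ`, every threshold `τ` with
`F̂_a(τ) ≤ q` satisfies `F_a(τ) ≤ q + ε`. -/
theorem theorem1_conditional (Ω : Type*) [MeasurableSpace Ω]
    (P : Measure Ω) [IsProbabilityMeasure P]
    (α : ℝ) (hα : α ∈ Set.Ioc (0 : ℝ) 1)
    (q ε : ℝ) (hε : ε ∈ Set.Ioo (0 : ℝ) (1 - q))
    (δ : ℝ) (hδ : δ ∈ Set.Ioo (0 : ℝ) 1)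
    (n : ℝ)
    (hn : n > (1 / 2) * Real.log (2 / (1 - Real.sqrt (1 - δ))) * (1 / ε) ^ 2
            * ((2 - α) / α) ^ 2)
    (F₀ Fa : ℝ → ℝ)
    (Fₘ : ℝ → ℝ) (hFₘ : ∀ x, Fₘ x = (1 - α) * F₀ x + α * Fa x)
    (Fhat₀ Fhatₘ : Ω → ℝ → ℝ)
    (A B : Set Ω)
    (hAdef : A = {ω | ∃ x, |Fhatₘ ω x - Fₘ x| > α * ε / (2 - α)})
    (hBdef : B = {ω | ∃ x, |Fhat₀ ω x - F₀ x| > α * ε / (2 - α)})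
    (hAmeas : MeasurableSet A) (hBmeas : MeasurableSet B)
    (hindep : P (A ∩ B) = P A * P B)
    (hPA : (P A).toReal ≤ 2 * Real.exp (-2 * n * (α * ε / (2 - α)) ^ 2))
    (hPB : (P B).toReal ≤ 2 * Real.exp (-2 * n * (α * ε / (2 - α)) ^ 2)) :
    1 - δ ≤
      (P {ω | ∀ τ : ℝ, (Fhatₘ ω τ - (1 - α) * Fhat₀ ω τ) / α ≤ q →
          Fa τ ≤ q + ε}).toReal := by
  obtain ⟨hα0, hα1⟩ := hα
  obtain ⟨hε0, hε1⟩ := hε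
  obtain ⟨hδ0, hδ1⟩ := hδ
  have h2α : (0:ℝ) < 2 - α := by linarith
  set lam : ℝ := α * ε / (2 - α) with hlam
  have hlam0 : 0 < lam := div_pos (mul_pos hα0 hε0) h2α
  have hsq : Real.sqrt (1 - δ) < 1 := by
    have : Real.sqrt (1 - δ) < Real.sqrt 1 :=
      Real.sqrt_lt_sqrt (by linarith) (by linarith)
    simpa using this
  have hsq0 : 0 ≤ Real.sqrt (1 - δ) := Real.sqrt_nonneg _
  have ht0 : 0 < 1 - Real.sqrt (1 - δ) := by linarith
  -- key tail bound
  have hL : Real.log (2 / (1 - Real.sqrt (1 - δ))) < 2 * n * lam ^ 2 := by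
    set L := Real.log (2 / (1 - Real.sqrt (1 - δ))) with hLdef
    have h2 : 0 < 2 * lam ^ 2 := by positivity
    have hkey : (2 * lam ^ 2) * ((1 / 2) * L * (1 / ε) ^ 2 * ((2 - α) / α) ^ 2) = L := by
      rw [hlam]; field_simp
    nlinarith [mul_lt_mul_of_pos_left hn h2]
  have hexp : 2 * Real.exp (-2 * n * lam ^ 2) < 1 - Real.sqrt (1 - δ) := by
    have h2t : (0:ℝ) < 2 / (1 - Real.sqrt (1 - δ)) := by positivity
    have : Real.exp (-2 * n * lam ^ 2) < Real.exp (-(Real.log (2 / (1 - Real.sqrt (1 - δ))))) := by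
      apply Real.exp_lt_exp.2; linarith
    rw [Real.exp_neg, Real.exp_log h2t] at this
    have : Real.exp (-2 * n * lam ^ 2) < (1 - Real.sqrt (1 - δ)) / 2 := by
      rw [inv_div] at this; exact this
    linarith
  set a : ℝ := (P A).toReal with ha
  set b : ℝ := (P B).toReal with hb
  have haT : a < 1 - Real.sqrt (1 - δ) := lt_of_le_of_lt hPA hexp
  have hbT : b < 1 - Real.sqrt (1 - δ) := lt_of_le_of_lt hPB hexp
  have ha0 : 0 ≤ a := ENNReal.toReal_nonneg
  have hb0 : 0 ≤ b := ENNReal.toReal_nonneg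
  -- measure computation
  have hUmeas : MeasurableSet (A ∪ B) := hAmeas.union hBmeas
  have hunion : P (A ∪ B) + P (A ∩ B) = P A + P B := measure_union_add_inter A hBmeas
  have hiR : (P (A ∩ B)).toReal = a * b := by
    rw [hindep, ENNReal.toReal_mul]
  have hunionR : (P (A ∪ B)).toReal + (P (A ∩ B)).toReal = a + b := by
    rw [← ENNReal.toReal_add (measure_ne_top P _) (measure_ne_top P _), hunion,
      ENNReal.toReal_add (measure_ne_top P _) (measure_ne_top P _)]
  have hU : (P (A ∪ B)).toReal = a + b - a * b := by
    rw [hiR] at hunionR; linarith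
  -- the complement is contained in the target set
  have hsub : (A ∪ B)ᶜ ⊆ {ω | ∀ τ : ℝ, (Fhatₘ ω τ - (1 - α) * Fhat₀ ω τ) / α ≤ q →
      Fa τ ≤ q + ε} := by
    intro ω hω
    rw [Set.compl_union] at hω
    obtain ⟨hωA, hωB⟩ := hω
    rw [hAdef] at hωA
    rw [hBdef] at hωB
    simp only [Set.mem_compl_iff, Set.mem_setOf_eq, not_exists, not_lt] at hωA hωB
    intro τ hτ
    have h1 := hωA τ
    have h2 := hωB τ
    rw [abs_le] at h1 h2
    have hτ' : Fhatₘ ω τ - (1 - α) * Fhat₀ ω τ ≤ α * q := by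
      rw [div_le_iff₀ hα0] at hτ; linarith
    have hFm := hFₘ τ
    have helam : lam * (2 - α) = α * ε := by
      rw [hlam]; field_simp
    have hgoal : α * Fa τ ≤ α * (q + ε) := by nlinarith [h1.1, h1.2, h2.1, h2.2]
    exact le_of_mul_le_mul_left (by linarith) hα0
  -- conclude
  have hmono : (P (A ∪ B)ᶜ).toReal ≤
      (P {ω | ∀ τ : ℝ, (Fhatₘ ω τ - (1 - α) * Fhat₀ ω τ) / α ≤ q → Fa τ ≤ q + ε}).toReal :=
    ENNReal.toReal_mono (measure_ne_top P _) (measure_mono hsub)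
  have hcompl : (P (A ∪ B)ᶜ).toReal = 1 - (P (A ∪ B)).toReal := by
    rw [measure_compl hUmeas (measure_ne_top P _), measure_univ,
      ENNReal.toReal_sub_of_le prob_le_one ENNReal.one_ne_top, ENNReal.toReal_one]
  have hfin : 1 - δ ≤ 1 - (a + b - a * b) := by
    clear_value a b
    have h1 : Real.sqrt (1 - δ) ≤ 1 - a := by linarith
    have h2 : Real.sqrt (1 - δ) ≤ 1 - b := by linarith
    have h3 : Real.sqrt (1 - δ) * Real.sqrt (1 - δ) ≤ (1 - a) * (1 - b) :=
      mul_le_mul h1 h2 hsq0 (by linarith)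
    have h4 : Real.sqrt (1 - δ) * Real.sqrt (1 - δ) = 1 - δ :=
      Real.mul_self_sqrt (by linarith)
    have h5 : (1 - a) * (1 - b) = 1 - (a + b - a * b) := by ring
    linarith [h3, h4, h5]
  calc (1:ℝ) - δ ≤ 1 - (a + b - a * b) := hfin
    _ = (P (A ∪ B)ᶜ).toReal := by rw [hcompl, hU]
    _ ≤ _ := hmono
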